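/- Let C ⊆ F_q^n × F_q^n be an additive (F_p-linear) code self-orthogonal with respect to the symplectic form, and let c ∈ P(C) be a codeword of the puncture code with support of size r. Then the code C' obtained by replacing each pair (a_i|b_i) by (c_i a_i | b_i) and restricting to the support of c is again self-orthogonal with respect to the symplectic form on F_q^r × F_q^r. -/
import Mathlib


/-- let `C ⊆ F_q^n × F_q^n` be an additive (`F_p`-linear) code that
is self-orthogonal with respect to the symplectic form
`(a|b)*(a'|b') = tr(Σ_i a_i' b_i − a_i b_i')`, and let `c` be a codeword of the
puncture code `P(C)` with support of size `r`.  Then the code obtained by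
replacing each pair `(a_i|b_i)` by `(c_i a_i | b_i)` and restricting to the
support of `c` is again self-orthogonal with respect to the symplectic form on
`F_q^r × F_q^r`. -/
theorem puncture_code_self_orthogonal (p : ℕ) [Fact p.Prime] (K : Type) [Field K]
    [Fintype K] [Algebra (ZMod p) K] (n r : ℕ) [DecidableEq (ZMod p)]
    (C : Submodule (ZMod p) ((Fin n → K) × (Fin n → K)))
    (hso : ∀ v ∈ C, ∀ w ∈ C,
      Algebra.trace (ZMod p) K (∑ i, (w.1 i * v.2 i - v.1 i * w.2 i)) = 0)
    (c : Fin n → ZMod p)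
    (hc : ∀ v ∈ C, ∀ w ∈ C,
      ∑ i, c i * Algebra.trace (ZMod p) K (v.1 i * w.2 i - w.1 i * v.2 i) = 0)
    (hr : Fintype.card { i // c i ≠ 0 } = r) :
    ∀ v ∈ C, ∀ w ∈ C,
      Algebra.trace (ZMod p) K (∑ i : { i // c i ≠ 0 },
        ((c i.1 • w.1 i.1) * v.2 i.1 - (c i.1 • v.1 i.1) * w.2 i.1)) = 0 := by
  intro v hv w hw
  classical
  rw [map_sum]
  have h3 : ∀ i : Fin n, Algebra.trace (ZMod p) K (c i • w.1 i * v.2 i - c i • v.1 i * w.2 i)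
      = -(c i * Algebra.trace (ZMod p) K (v.1 i * w.2 i - w.1 i * v.2 i)) := by
    intro i
    rw [smul_mul_assoc, smul_mul_assoc, ← smul_sub, map_smul, smul_eq_mul, ← neg_sub,
      map_neg, mul_neg]
  simp_rw [h3]
  rw [Finset.sum_neg_distrib, neg_eq_zero]
  have h4 : (∑ i : { i // c i ≠ 0 },
      c i.1 * Algebra.trace (ZMod p) K (v.1 i.1 * w.2 i.1 - w.1 i.1 * v.2 i.1))
      = ∑ i : Fin n, c i * Algebra.trace (ZMod p) K (v.1 i * w.2 i - w.1 i * v.2 i) := by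
    rw [← Finset.sum_subtype (Finset.univ.filter fun i => c i ≠ 0) (fun i => by simp)
      (fun i => c i * Algebra.trace (ZMod p) K (v.1 i * w.2 i - w.1 i * v.2 i))]
    exact Finset.sum_filter_of_ne (fun i _ h h0 => h (by rw [h0, zero_mul]))
  rw [h4]
  exact hc v hv w hw
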